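/- Let χ > 1 and let V : (0, ∞) → (0, ∞) be a function such that for some S > 0 and all r > 0, V(r) ≥ (r√S/2)^{2χ/(2χ-1)} · V(r/2)^{χ/(2χ-1)}. Assume moreover that V(ρ)^{(χ/(2χ-1))^m} → 1 whenever ρ = r/2^m and m → ∞ (which holds if V(ρ) = b·ρ^n(1 + o(1)) as ρ → 0 for some b > 0 and n). Then there exists a constant C = C(χ, S) > 0 such that V(r) ≥ C·r^{2χ/(χ-1)} for all r > 0. -/

import Mathlib

open Filter

/-- Abstract iteration lemma for the volume growth estimate. -/
theorem stmt_13 (χ S : ℝ) (hχ : 1 < χ) (hS : 0 < S) (V : ℝ → ℝ)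
    (hVpos : ∀ r : ℝ, 0 < r → 0 < V r)
    (hiter : ∀ r : ℝ, 0 < r →
      (r * Real.sqrt S / 2) ^ (2 * χ / (2 * χ - 1)) * (V (r / 2)) ^ (χ / (2 * χ - 1)) ≤ V r)
    (hlim : ∀ r : ℝ, 0 < r →
      Tendsto (fun m : ℕ => (V (r / 2 ^ m)) ^ ((χ / (2 * χ - 1)) ^ m)) atTop (nhds 1)) :
    ∃ C : ℝ, 0 < C ∧ ∀ r : ℝ, 0 < r → C * r ^ (2 * χ / (χ - 1)) ≤ V r := by
  set q : ℝ := χ / (2 * χ - 1) with hq_def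
  have h2χ : (0:ℝ) < 2 * χ - 1 := by linarith
  have hq0 : 0 < q := div_pos (by linarith) h2χ
  have hq1 : q < 1 := by rw [hq_def, div_lt_one h2χ]; linarith
  have h1q : 0 < 1 - q := by linarith
  have hsqrtS : 0 < Real.sqrt S := Real.sqrt_pos.mpr hS
  have hχ1 : (0:ℝ) < χ - 1 := by linarith
  -- log form of the iteration inequality
  have hlog : ∀ r : ℝ, 0 < r →
      2 * q * Real.log (r * Real.sqrt S / 2) + q * Real.log (V (r / 2)) ≤ Real.log (V r) := by
    intro r hr
    have ha : 0 < r * Real.sqrt S / 2 := by positivity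
    have hb : 0 < V (r / 2) := hVpos _ (by positivity)
    have h := hiter r hr
    have h2q : 2 * χ / (2 * χ - 1) = 2 * q := by rw [hq_def]; ring
    rw [h2q] at h
    have hpos : 0 < (r * Real.sqrt S / 2) ^ (2 * q) * (V (r / 2)) ^ q := by positivity
    have hlog1 : Real.log ((r * Real.sqrt S / 2) ^ (2 * q) * (V (r / 2)) ^ q)
        ≤ Real.log (V r) := Real.log_le_log hpos h
    rw [Real.log_mul (by positivity) (by positivity), Real.log_rpow ha,
      Real.log_rpow hb] at hlog1
    linarith
  -- iterated inequality
  have key : ∀ r : ℝ, 0 < r → ∀ m : ℕ,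
      q ^ m * Real.log (V (r / 2 ^ m)) +
        ∑ i ∈ Finset.range m, q ^ i * (2 * q * Real.log (r / 2 ^ i * Real.sqrt S / 2))
      ≤ Real.log (V r) := by
    intro r hr m
    induction m with
    | zero => simp
    | succ m ih =>
      have hrm : 0 < r / 2 ^ m := by positivity
      have h := hlog (r / 2 ^ m) hrm
      have h2 : r / 2 ^ m / 2 = r / 2 ^ (m + 1) := by ring
      rw [h2] at h
      have hmul : q ^ m * (2 * q * Real.log (r / 2 ^ m * Real.sqrt S / 2)
            + q * Real.log (V (r / 2 ^ (m + 1))))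
          ≤ q ^ m * Real.log (V (r / 2 ^ m)) :=
        mul_le_mul_of_nonneg_left h (by positivity)
      rw [Finset.sum_range_succ]
      have hp : q ^ (m + 1) = q ^ m * q := pow_succ q m
      rw [hp]
      nlinarith [hmul, ih]
  refine ⟨S ^ (χ / (χ - 1)) / (2:ℝ) ^ (2 * ∑' i : ℕ, ((i:ℝ) + 1) * q ^ (i + 1)), by positivity, ?_⟩
  intro r hr
  set T : ℝ := ∑' i : ℕ, ((i:ℝ) + 1) * q ^ (i + 1) with hT
  -- limit of the leading term
  have hA : Tendsto (fun m : ℕ => q ^ m * Real.log (V (r / 2 ^ m))) atTop (nhds 0) := by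
    have h := (Real.continuousAt_log one_ne_zero).tendsto.comp (hlim r hr)
    simp only [Real.log_one] at h
    convert h using 2 with m
    rw [Function.comp_apply, Real.log_rpow (hVpos _ (by positivity))]
  -- summability / value of the series
  have hs1 : HasSum (fun i : ℕ => q ^ (i + 1)) (q * (1 - q)⁻¹) := by
    have := (hasSum_geometric_of_lt_one hq0.le hq1).mul_left q
    have hf : (fun i : ℕ => q ^ (i + 1)) = fun i => q * q ^ i := by
      funext i
      rw [pow_succ]; ring
    rw [hf]; exact this
  have hs2 : Summable (fun i : ℕ => ((i:ℝ) + 1) * q ^ (i + 1)) := by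
    have h := summable_pow_mul_geometric_of_norm_lt_one (k := 1) (r := q)
      (by rw [Real.norm_eq_abs, abs_of_pos hq0]; exact hq1)
    have h2 := (summable_nat_add_iff 1).mpr h
    have hf : (fun i : ℕ => ((i:ℝ) + 1) * q ^ (i + 1))
        = fun i : ℕ => (((i + 1 : ℕ) : ℝ) ^ 1 * q ^ (i + 1)) := by
      funext i
      push_cast; ring
    rw [hf]; exact h2
  have hsum : HasSum (fun i : ℕ => q ^ i * (2 * q * Real.log (r / 2 ^ i * Real.sqrt S / 2)))
      (2 * Real.log (r * Real.sqrt S) * (q * (1 - q)⁻¹) - 2 * Real.log 2 * T) := by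
    have h := (hs1.mul_left (2 * Real.log (r * Real.sqrt S))).sub
      ((hs2.hasSum).mul_left (2 * Real.log 2))
    have hf : (fun i : ℕ => q ^ i * (2 * q * Real.log (r / 2 ^ i * Real.sqrt S / 2)))
        = fun i : ℕ => 2 * Real.log (r * Real.sqrt S) * q ^ (i + 1)
          - 2 * Real.log 2 * (((i:ℝ) + 1) * q ^ (i + 1)) := by
      funext i
      have he : r / 2 ^ i * Real.sqrt S / 2 = r * Real.sqrt S / 2 ^ (i + 1) := by
        rw [pow_succ]; ring
      rw [he, Real.log_div (by positivity) (by positivity), Real.log_pow]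
      push_cast; ring
    rw [hf]; exact h
  have hL : 2 * Real.log (r * Real.sqrt S) * (q * (1 - q)⁻¹) - 2 * Real.log 2 * T
      ≤ Real.log (V r) := by
    have htend : Tendsto (fun m : ℕ => q ^ m * Real.log (V (r / 2 ^ m)) +
        ∑ i ∈ Finset.range m, q ^ i * (2 * q * Real.log (r / 2 ^ i * Real.sqrt S / 2)))
        atTop (nhds (0 + (2 * Real.log (r * Real.sqrt S) * (q * (1 - q)⁻¹)
          - 2 * Real.log 2 * T))) := hA.add hsum.tendsto_sum_nat
    rw [zero_add] at htend
    exact le_of_tendsto htend (Filter.Eventually.of_forall (key r hr))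
  -- exponentiate
  have hfrac : q * (1 - q)⁻¹ = χ / (χ - 1) := by
    have h1 : (2 * χ - 1) ≠ 0 := ne_of_gt h2χ
    have h2 : (χ - 1) ≠ 0 := ne_of_gt hχ1
    have h3 : (-1 + χ) ≠ 0 := by intro h; apply h2; linarith
    rw [hq_def]
    field_simp
    have h4 : (χ * 2 - 1) * (1 - χ / (χ * 2 - 1)) = χ - 1 := by
      have h5 : χ * 2 - 1 ≠ 0 := by linarith
      field_simp
      ring
    rw [h4, div_self h2]
  have hVr : Real.exp (2 * Real.log (r * Real.sqrt S) * (q * (1 - q)⁻¹) - 2 * Real.log 2 * T)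
      ≤ V r := by
    calc Real.exp _ ≤ Real.exp (Real.log (V r)) := Real.exp_le_exp.mpr hL
    _ = V r := Real.exp_log (hVpos r hr)
  rw [Real.exp_sub] at hVr
  have he1 : Real.exp (2 * Real.log (r * Real.sqrt S) * (q * (1 - q)⁻¹))
      = (r * Real.sqrt S) ^ (2 * χ / (χ - 1)) := by
    rw [Real.rpow_def_of_pos (by positivity), hfrac]
    ring_nf
  have he2 : Real.exp (2 * Real.log 2 * T) = (2:ℝ) ^ (2 * T) := by
    rw [Real.rpow_def_of_pos two_pos]
    ring_nf
  rw [he1, he2] at hVr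
  have he3 : (r * Real.sqrt S) ^ (2 * χ / (χ - 1))
      = r ^ (2 * χ / (χ - 1)) * S ^ (χ / (χ - 1)) := by
    rw [Real.mul_rpow hr.le hsqrtS.le, Real.sqrt_eq_rpow, ← Real.rpow_mul hS.le]
    congr 1
    field_simp
  rw [he3] at hVr
  calc S ^ (χ / (χ - 1)) / (2:ℝ) ^ (2 * T) * r ^ (2 * χ / (χ - 1))
      = r ^ (2 * χ / (χ - 1)) * S ^ (χ / (χ - 1)) / (2:ℝ) ^ (2 * T) := by ring
    _ ≤ V r := hVr
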